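/- Let $\{W_k\}_{k \ge 0}$ be a sequence of $m \times m$ row-stochastic matrices. Then there exists a sequence $\{\pi_k\}_{k\ge0}$ of stochastic vectors (nonnegative entries summing to 1) such that $\pi_{k+1}^{\mathsf{T}} W_k = \pi_k^{\mathsf{T}}$ for all $k \ge 0$. -/
import Mathlib

noncomputable def seqAux (m : ℕ) (W : ℕ → Matrix (Fin m) (Fin m) ℝ) (n : ℕ) :
    ℕ → Fin m → ℝ
  | 0 => fun _ => (m : ℝ)⁻¹
  | d + 1 => fun j => ∑ i, seqAux m W n d i * W (n - (d+1)) i j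

theorem stmt_6 (m : ℕ) (hm : 0 < m) (W : ℕ → Matrix (Fin m) (Fin m) ℝ)
    (hWnn : ∀ k i j, 0 ≤ W k i j) (hWrow : ∀ k i, ∑ j, W k i j = 1) :
    ∃ π : ℕ → Fin m → ℝ,
      (∀ k, (∀ i, 0 ≤ π k i) ∧ ∑ i, π k i = 1)
      ∧ ∀ k j, ∑ i, π (k + 1) i * W k i j = π k j := by
  classical
  set s : ℕ → ℕ → Fin m → ℝ := fun n k => seqAux m W n (n - k) with hs
  -- basic properties of seqAux
  have hnn : ∀ n d i, 0 ≤ seqAux m W n d i := by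
    intro n d
    induction d with
    | zero => intro i; simp [seqAux]
    | succ d ih =>
      intro i
      simp only [seqAux]
      exact Finset.sum_nonneg fun j _ => mul_nonneg (ih j) (hWnn _ _ _)
  have hsum : ∀ n d, ∑ i, seqAux m W n d i = 1 := by
    intro n d
    induction d with
    | zero =>
      simp [seqAux, Finset.sum_const, Finset.card_univ]
      field_simp
    | succ d ih =>
      simp only [seqAux]
      rw [Finset.sum_comm]
      calc ∑ i, ∑ j, seqAux m W n d i * W (n - (d+1)) i j
          = ∑ i, seqAux m W n d i * ∑ j, W (n - (d+1)) i j := by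
            simp [Finset.mul_sum]
        _ = 1 := by simp [hWrow, ih]
  have hle1 : ∀ n k i, s n k i ≤ 1 := by
    intro n k i
    calc s n k i ≤ ∑ j, seqAux m W n (n - k) j :=
          Finset.single_le_sum (fun j _ => hnn n (n-k) j) (Finset.mem_univ i)
      _ = 1 := hsum n (n - k)
  have hrel : ∀ n k, k + 1 ≤ n → ∀ j, ∑ i, s n (k+1) i * W k i j = s n k j := by
    intro n k hk j
    have h1 : n - k = (n - (k+1)) + 1 := by omega
    have h2 : n - ((n - (k+1)) + 1) = k := by omega
    simp only [hs]
    rw [h1]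
    simp only [seqAux, h2]
  -- ultrafilter
  obtain ⟨U, hU⟩ : ∃ U : Ultrafilter ℕ, ↑U ≤ (Filter.atTop : Filter ℕ) :=
    ⟨Ultrafilter.of Filter.atTop, Ultrafilter.of_le _⟩
  have hlim : ∀ k i, ∃ L, Filter.Tendsto (fun n => s n k i) U (nhds L) := by
    intro k i
    obtain ⟨a, _, ha⟩ := (isCompact_Icc (a := (0:ℝ)) (b := 1)).ultrafilter_le_nhds
      (U.map (fun n => s n k i)) (by
        rw [Filter.le_principal_iff]
        exact Filter.mem_map.mpr (Filter.univ_mem' fun n => ⟨hnn n (n-k) i, hle1 n k i⟩))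
    exact ⟨a, ha⟩
  choose π hπ using fun k => fun i => hlim k i
  refine ⟨π, ?_, ?_⟩
  · intro k
    constructor
    · intro i
      exact ge_of_tendsto (hπ k i) (Filter.Eventually.of_forall fun n => hnn n (n-k) i)
    · have h1 : Filter.Tendsto (fun n => ∑ i, s n k i) U (nhds (∑ i, π k i)) :=
        tendsto_finset_sum _ fun i _ => hπ k i
      have h2 : Filter.Tendsto (fun n => ∑ i, s n k i) U (nhds 1) := by
        have : (fun n => ∑ i, s n k i) = fun n => (1:ℝ) := by
          funext n; exact hsum n (n - k)
        rw [this]; exact tendsto_const_nhds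
      exact tendsto_nhds_unique h1 h2
  · intro k j
    have h1 : Filter.Tendsto (fun n => ∑ i, s n (k+1) i * W k i j) U
        (nhds (∑ i, π (k+1) i * W k i j)) :=
      tendsto_finset_sum _ fun i _ => (hπ (k+1) i).mul_const _
    have h2 : Filter.Tendsto (fun n => ∑ i, s n (k+1) i * W k i j) U (nhds (π k j)) := by
      refine Filter.Tendsto.congr' ?_ (hπ k j)
      have : ∀ᶠ n in (Filter.atTop : Filter ℕ), s n k j = ∑ i, s n (k+1) i * W k i j := by
        filter_upwards [Filter.eventually_ge_atTop (k+1)] with n hn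
        exact (hrel n k hn j).symm
      exact this.filter_mono hU
    exact tendsto_nhds_unique h1 h2
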